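/- With h1, h2 as in the context, the subgroups MonoidHom.range h1 and MonoidHom.range h2 of F are not conjugate: for every w ∈ F, w • (MonoidHom.range h1) • w⁻¹ ≠ MonoidHom.range h2. -/
import Mathlib


def u : FreeGroup Bool := FreeGroup.of true
def v : FreeGroup Bool := FreeGroup.of false

/-- `h1 : u ↦ uvuvv, v ↦ UUVU`. -/
def h1 : FreeGroup Bool →* FreeGroup Bool :=
  FreeGroup.lift fun b => if b then u * v * u * v * v else u⁻¹ * u⁻¹ * v⁻¹ * u⁻¹

/-- `h2 : u ↦ vuvv, v ↦ UUVUV`. -/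
def h2 : FreeGroup Bool →* FreeGroup Bool :=
  FreeGroup.lift fun b => if b then v * u * v * v else u⁻¹ * u⁻¹ * v⁻¹ * u⁻¹ * v⁻¹

/-- Abelian invariant: `u ↦ 3, v ↦ -2` in `ZMod 7`. -/
def φ : FreeGroup Bool →* Multiplicative (ZMod 7) :=
  FreeGroup.lift fun b => Multiplicative.ofAdd (if b then (3 : ZMod 7) else -2)

lemma φ_h1 (s : FreeGroup Bool) : φ (h1 s) = 1 := by
  have h : φ.comp h1 = 1 := by
    apply FreeGroup.ext_hom
    intro b
    cases b <;>
      simp [φ, h1, u, v, map_mul, map_inv, FreeGroup.lift_apply_of] <;> decide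
  have := congrArg (fun f : FreeGroup Bool →* Multiplicative (ZMod 7) => f s) h
  simpa using this

theorem stmt_1 (w : FreeGroup Bool) :
    Subgroup.map (MulAut.conj w).toMonoidHom h1.range ≠ h2.range := by
  intro heq
  have hmem : h2 u ∈ h2.range := ⟨u, rfl⟩
  rw [← heq] at hmem
  obtain ⟨t, ht, hconj⟩ := hmem
  obtain ⟨s, hs⟩ := ht
  have h1' : φ (h2 u) = 1 := by
    have : φ (w * t * w⁻¹) = φ (h2 u) := by
      simpa [MulAut.conj] using congrArg φ hconj
    have hcomm : φ (w * t * w⁻¹) = φ t := by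
      rw [map_mul, map_mul, map_inv]
      exact mul_inv_cancel_comm _ _
    rw [← this, hcomm, ← hs, φ_h1]
  have h2' : φ (h2 u) = Multiplicative.ofAdd (-3 : ZMod 7) := by
    simp [φ, h2, u, v, map_mul, FreeGroup.lift_apply_of]
    decide
  rw [h2'] at h1'
  exact absurd h1' (by decide)
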